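/- A bounded operator T on a complex Hilbert space is k-paranormal if and only if for every real λ > 0 the operator T*^{k+1}T^{k+1} − (k+1)λ^k T*T + kλ^{k+1} I is positive. -/

import Mathlib

theorem amgm_aux (k : ℕ) (u v : ℝ) (hu : 0 ≤ u) (hv : 0 ≤ v) :
    (k + 1 : ℝ) * u * v ^ k ≤ u ^ (k + 1) + k * v ^ (k + 1) := by
  induction k with
  | zero => simp
  | succ n ih =>
    have key : 0 ≤ (u - v) * (u ^ (n + 1) - v ^ (n + 1)) := by
      rcases le_total u v with h | h
      · nlinarith [pow_le_pow_left₀ hu h (n+1)]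
      · exact mul_nonneg (by linarith) (by simp [pow_le_pow_left₀ hv h])
    have h2 := mul_le_mul_of_nonneg_right ih hv
    push_cast
    simp only [pow_succ] at *
    nlinarith [h2, key]

theorem fwd_aux (k : ℕ) (hk : k ≠ 0) (a b c lam : ℝ) (ha : 0 ≤ a) (hb : 0 ≤ b) (hc : 0 ≤ c)
    (hlam : 0 < lam) (hx : a ^ (k+1) ≤ b * c ^ k) :
    0 ≤ b^2 - (k+1)*lam^k*a^2 + k*lam^(k+1)*c^2 := by
  rcases eq_or_lt_of_le hc with hc0 | hc0
  · have hc0 : c = 0 := hc0.symm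
    have ha0 : a = 0 := by
      have h1 : a ^ (k+1) ≤ 0 := by simpa [hc0, zero_pow hk] using hx
      have h2 : a ^ (k+1) = 0 := le_antisymm h1 (by positivity)
      exact pow_eq_zero_iff (by omega) |>.mp h2
    rw [ha0, hc0]
    simp
    positivity
  · have hg := amgm_aux k (a^2) (lam*c^2) (sq_nonneg a) (by positivity)
    have e1 : (lam*c^2)^k = lam^k*(c^k)^2 := by rw [mul_pow, pow_right_comm]
    have e2 : (lam*c^2)^(k+1) = lam^(k+1)*((c^k)^2*c^2) := by
      rw [mul_pow, pow_right_comm c 2 (k+1), pow_succ c k, mul_pow]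
    have e3 : (a^2)^(k+1) = (a^(k+1))^2 := pow_right_comm a 2 (k+1)
    rw [e1, e2, e3] at hg
    have hsq : (a^(k+1))^2 ≤ b^2*(c^k)^2 := by
      have := pow_le_pow_left₀ (by positivity) hx 2
      simpa [mul_pow] using this
    have hck : 0 < (c^k)^2 := by positivity
    nlinarith [hg, hsq, hck]

theorem bwd_aux (k : ℕ) (hk : k ≠ 0) (a b c : ℝ) (ha : 0 ≤ a) (hb0 : 0 ≤ b) (hc : 0 ≤ c)
    (h : ∀ lam : ℝ, 0 < lam → 0 ≤ b^2 - (k+1)*lam^k*a^2 + k*lam^(k+1)*c^2) :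
    a ^ (k+1) ≤ b * c ^ k := by
  rcases eq_or_lt_of_le hc with hc0 | hc0
  · have hc0 : c = 0 := hc0.symm
    have hb2 : ∀ lam : ℝ, 0 < lam → (k+1:ℝ)*lam^k*a^2 ≤ b^2 := by
      intro lam hlam
      have h0 := h lam hlam
      rw [hc0] at h0
      simp only [ne_eq, OfNat.ofNat_ne_zero, not_false_eq_true, zero_pow, mul_zero] at h0
      linarith
    by_cases ha0 : a = 0
    · rw [ha0, hc0]; simp [zero_pow hk]
    · exfalso
      have hapos : 0 < a := lt_of_le_of_ne ha (Ne.symm ha0)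
      set lam := max 1 (b^2/a^2 + 1) with hl
      have hlam : 0 < lam := lt_of_lt_of_le one_pos (le_max_left _ _)
      have hlam1 : 1 ≤ lam := le_max_left _ _
      have hlamk : lam ≤ lam^k := le_self_pow₀ hlam1 hk
      have h2 := hb2 lam hlam
      have h3 : b^2/a^2 + 1 ≤ lam := le_max_right _ _
      have h4 : b^2 + a^2 ≤ lam * a^2 := by
        have : (b^2/a^2 + 1) * a^2 ≤ lam * a^2 :=
          mul_le_mul_of_nonneg_right h3 (sq_nonneg a)
        calc b^2 + a^2 = (b^2/a^2 + 1) * a^2 := by field_simp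
          _ ≤ lam * a^2 := this
      have h5 : lam * a^2 ≤ (k+1:ℝ)*lam^k*a^2 := by
        have hk1 : (1:ℝ) ≤ (k:ℝ)+1 := by linarith [Nat.cast_nonneg (α := ℝ) k]
        have hle : lam ≤ ((k:ℝ)+1)*lam^k :=
          le_trans hlamk (le_mul_of_one_le_left (le_of_lt (pow_pos hlam k)) hk1)
        exact mul_le_mul_of_nonneg_right hle (sq_nonneg a)
      nlinarith [h2, h4, h5, hapos]
  · by_cases hb : b = 0
    · have ha0 : a = 0 := by
        by_contra hne
        have hapos : 0 < a := lt_of_le_of_ne ha (Ne.symm hne)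
        have hkpos : (0:ℝ) < k := by exact_mod_cast Nat.pos_of_ne_zero hk
        set lam := a^2/(2*k*c^2) with hl
        have hlam : 0 < lam := by positivity
        have h1 := h lam hlam
        rw [hb] at h1
        have hlk : 0 < lam^k := pow_pos hlam k
        have h2 : (k+1:ℝ)*a^2 ≤ k*lam*c^2 := by
          simp only [pow_succ] at h1
          nlinarith [h1, hlk]
        have h3 : (k:ℝ)*lam*c^2 = a^2/2 := by
          rw [hl]; field_simp
        nlinarith [h2, h3, hapos]
      rw [ha0]
      simp [zero_pow hk]
      positivity
    · have hbpos : 0 < b := lt_of_le_of_ne hb0 (Ne.symm hb)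
      set lam := ((b^2/c^2) ^ ((1:ℝ)/(k+1)) : ℝ) with hl
      have hlam : 0 < lam := Real.rpow_pos_of_pos (by positivity) _
      have hE : lam^(k+1) = b^2/c^2 := by
        rw [hl, ← Real.rpow_natCast ((b^2/c^2) ^ ((1:ℝ)/(k+1))) (k+1),
          ← Real.rpow_mul (by positivity)]
        rw [show (1:ℝ)/(k+1) * ((k+1 : ℕ) : ℝ) = 1 by push_cast; field_simp]
        exact Real.rpow_one _
      have hE2 : lam^(k+1)*c^2 = b^2 := by
        rw [hE]; field_simp
      have h1 := h lam hlam
      rw [show (k:ℝ)*lam^(k+1)*c^2 = k*b^2 by rw [← hE2]; ring] at h1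
      have h3 : lam^k * a^2 ≤ b^2 := by
        nlinarith [h1, Nat.cast_nonneg (α := ℝ) k]
      have h4 : (lam^k*a^2)^(k+1) ≤ (b^2)^(k+1) := pow_le_pow_left₀ (by positivity) h3 (k+1)
      have h5 : (b^2)^k * (a^(k+1))^2 ≤ (b^2)^(k+1) * (c^2)^k := by
        calc (b^2)^k * (a^(k+1))^2 = (lam^(k+1)*c^2)^k * (a^(k+1))^2 := by rw [hE2]
          _ = (lam^k*a^2)^(k+1) * (c^2)^k := by ring
          _ ≤ (b^2)^(k+1) * (c^2)^k := mul_le_mul_of_nonneg_right h4 (by positivity)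
      have h6 : (a^(k+1))^2 ≤ (b*c^k)^2 := by
        have hbk : 0 < (b^2)^k := by positivity
        have he : (b^2)^(k+1)*(c^2)^k = (b^2)^k * (b*c^k)^2 := by
          rw [pow_succ, show (c^2)^k = (c^k)^2 from pow_right_comm c 2 k]
          ring
        rw [he] at h5
        exact le_of_mul_le_mul_left (by linarith [h5]) hbk
      nlinarith [h6, pow_nonneg ha (k+1), mul_nonneg hb0 (pow_nonneg hc k)]
theorem stmt_6 {H : Type*} [NormedAddCommGroup H] [InnerProductSpace ℂ H] [CompleteSpace H]
    (T : H →L[ℂ] H) (k : ℕ) (hk : 1 ≤ k) :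
    (∀ x : H, ‖T x‖ ^ (k + 1) ≤ ‖(T ^ (k + 1)) x‖ * ‖x‖ ^ k) ↔
      (∀ lam : ℝ, 0 < lam → ∀ x : H,
        0 ≤ (inner ℂ ((((ContinuousLinearMap.adjoint T) ^ (k + 1) * T ^ (k + 1)
              - (((k + 1 : ℝ) * lam ^ k : ℝ) : ℂ) • (ContinuousLinearMap.adjoint T * T)
              + (((k : ℝ) * lam ^ (k + 1) : ℝ) : ℂ) • (1 : H →L[ℂ] H))) x) x : ℂ).re) := by
  have hkne : k ≠ 0 := by omega
  have key : ∀ (lam : ℝ) (x : H),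
      (inner ℂ ((((ContinuousLinearMap.adjoint T) ^ (k + 1) * T ^ (k + 1)
              - (((k + 1 : ℝ) * lam ^ k : ℝ) : ℂ) • (ContinuousLinearMap.adjoint T * T)
              + (((k : ℝ) * lam ^ (k + 1) : ℝ) : ℂ) • (1 : H →L[ℂ] H))) x) x : ℂ).re
      = ‖(T ^ (k+1)) x‖^2 - (k+1)*lam^k*‖T x‖^2 + k*lam^(k+1)*‖x‖^2 := by
    intro lam x
    have hadj : (ContinuousLinearMap.adjoint T)^(k+1) = ContinuousLinearMap.adjoint (T^(k+1)) := by
      rw [← ContinuousLinearMap.star_eq_adjoint, ← ContinuousLinearMap.star_eq_adjoint, star_pow]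
    simp only [ContinuousLinearMap.add_apply, ContinuousLinearMap.sub_apply,
      ContinuousLinearMap.smul_apply, ContinuousLinearMap.one_apply, ContinuousLinearMap.mul_apply,
      inner_add_left, inner_sub_left, inner_smul_left, hadj, ContinuousLinearMap.adjoint_inner_left,
      inner_self_eq_norm_sq_to_K]
    push_cast
    simp [← Complex.ofReal_pow, Complex.add_re, Complex.sub_re, Complex.mul_re, Complex.conj_ofReal]
  constructor
  · intro h lam hlam x
    rw [key]
    exact fwd_aux k hkne _ _ _ lam (norm_nonneg _) (norm_nonneg _) (norm_nonneg _) hlam (h x)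
  · intro h x
    exact bwd_aux k hkne _ _ _ (norm_nonneg _) (norm_nonneg _) (norm_nonneg _)
      (fun lam hlam => (key lam x) ▸ (h lam hlam x))
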